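/- Let the dual objective be F(x,λ) = λ − ∫ l(ξ)(f(x,ξ) − λ)_− dξ + ∫ u(ξ)(f(x,ξ) − λ)_+ dξ and v(x) = sup_{p: l≤p≤u, ∫p=1} ∫ f(x,ξ)p(ξ)dξ. Then for every x ∈ X and every λ ∈ ℝ, v(x) ≤ F(x,λ). -/
import Mathlib


open MeasureTheory

/-- For every `x ∈ X` and every `λ ∈ ℝ`, the primal worst-case value
`v(x) = sup_{p : l ≤ p ≤ u, ∫p = 1} ∫ f(x,·) p` is at most the dual objective
`F(x,λ) = λ − ∫ l (f(x,·) − λ)₋ + ∫ u (f(x,·) − λ)₊`. -/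
theorem primal_le_dual
    {n m : ℕ} (X : Set (EuclideanSpace ℝ (Fin n)))
    (μ : Measure (EuclideanSpace ℝ (Fin m)))
    (f : EuclideanSpace ℝ (Fin n) → EuclideanSpace ℝ (Fin m) → ℝ)
    (l u : EuclideanSpace ℝ (Fin m) → ℝ)
    (hl : Measurable l) (hu : Measurable u)
    (hl0 : ∀ ξ, 0 ≤ l ξ) (hlu : ∀ ξ, l ξ ≤ u ξ)
    (hfmeas : ∀ x ∈ X, Measurable (f x))
    (hfu : ∀ x ∈ X, Integrable (fun ξ => |f x ξ| * u ξ) μ)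
    (hu_int : Integrable u μ)
    (D : Set (EuclideanSpace ℝ (Fin m) → ℝ))
    (hD : D = {p | Measurable p ∧ (∀ ξ, l ξ ≤ p ξ ∧ p ξ ≤ u ξ) ∧ ∫ ξ, p ξ ∂μ = 1})
    (hDne : D.Nonempty) :
    ∀ x ∈ X, ∀ lam : ℝ,
      sSup ((fun p => ∫ ξ, f x ξ * p ξ ∂μ) '' D) ≤
        lam - ∫ ξ, l ξ * max (lam - f x ξ) 0 ∂μ +
          ∫ ξ, u ξ * max (f x ξ - lam) 0 ∂μ := by
  intro x hx lam
  have hfm := hfmeas x hx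
  have hfabsu := hfu x hx
  -- integrability of the dual terms
  have hbound : Integrable (fun ξ => |f x ξ| * u ξ + |lam| * u ξ) μ :=
    hfabsu.add (hu_int.const_mul _)
  have hu0 : ∀ ξ, 0 ≤ u ξ := fun ξ => (hl0 ξ).trans (hlu ξ)
  have hgu : Integrable (fun ξ => u ξ * max (f x ξ - lam) 0) μ := by
    refine hbound.mono ((hu.mul ((hfm.sub measurable_const).max measurable_const)).aestronglyMeasurable) ?_
    filter_upwards with ξ
    rw [Real.norm_eq_abs, Real.norm_eq_abs, abs_mul, abs_of_nonneg (hu0 ξ),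
      abs_of_nonneg (le_max_right _ _)]
    have h1 : max (f x ξ - lam) 0 ≤ |f x ξ| + |lam| := by
      rcases le_or_gt (f x ξ - lam) 0 with h | h
      · rw [max_eq_right h]; positivity
      · rw [max_eq_left h.le]
        have := abs_sub_abs_le_abs_sub (f x ξ) lam
        have := le_abs_self (f x ξ); have := neg_abs_le lam; linarith [abs_nonneg lam, le_abs_self (f x ξ), neg_abs_le lam]
    have h2 : u ξ * max (f x ξ - lam) 0 ≤ u ξ * (|f x ξ| + |lam|) :=
      mul_le_mul_of_nonneg_left h1 (hu0 ξ)
    have h3 : u ξ * (|f x ξ| + |lam|) = |f x ξ| * u ξ + |lam| * u ξ := by ring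
    calc u ξ * max (f x ξ - lam) 0 ≤ |f x ξ| * u ξ + |lam| * u ξ := by rw [← h3]; exact h2
      _ ≤ |(|f x ξ| * u ξ + |lam| * u ξ)| := le_abs_self _
  have hgl : Integrable (fun ξ => l ξ * max (lam - f x ξ) 0) μ := by
    refine hbound.mono ((hl.mul ((measurable_const.sub hfm).max measurable_const)).aestronglyMeasurable) ?_
    filter_upwards with ξ
    rw [Real.norm_eq_abs, Real.norm_eq_abs, abs_mul, abs_of_nonneg (hl0 ξ),
      abs_of_nonneg (le_max_right _ _)]
    have h1 : max (lam - f x ξ) 0 ≤ |f x ξ| + |lam| := by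
      rcases le_or_gt (lam - f x ξ) 0 with h | h
      · rw [max_eq_right h]; positivity
      · rw [max_eq_left h.le]
        linarith [le_abs_self lam, neg_abs_le (f x ξ)]
    have h2 : l ξ * max (lam - f x ξ) 0 ≤ u ξ * (|f x ξ| + |lam|) := by
      have : 0 ≤ |f x ξ| + |lam| := by positivity
      exact mul_le_mul (hlu ξ) h1 (le_max_right _ _) (hu0 ξ)
    calc l ξ * max (lam - f x ξ) 0 ≤ |f x ξ| * u ξ + |lam| * u ξ := by linarith
      _ ≤ |(|f x ξ| * u ξ + |lam| * u ξ)| := le_abs_self _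
  refine csSup_le (hDne.image _) ?_
  · rintro v ⟨p, hp, rfl⟩
    rw [hD] at hp
    obtain ⟨hpm, hpb, hpint⟩ := hp
    have hp0 : ∀ ξ, 0 ≤ p ξ := fun ξ => (hl0 ξ).trans (hpb ξ).1
    have hpI : Integrable p μ := by
      refine hu_int.mono hpm.aestronglyMeasurable ?_
      filter_upwards with ξ
      rw [Real.norm_eq_abs, Real.norm_eq_abs, abs_of_nonneg (hp0 ξ)]
      exact (hpb ξ).2.trans (le_abs_self _)
    have hfp : Integrable (fun ξ => f x ξ * p ξ) μ := by
      refine hfabsu.mono ((hfm.mul hpm).aestronglyMeasurable) ?_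
      filter_upwards with ξ
      rw [Real.norm_eq_abs, Real.norm_eq_abs, abs_mul]
      have h1 : |p ξ| ≤ u ξ := by
        rw [abs_of_nonneg (hp0 ξ)]; exact (hpb ξ).2
      exact le_trans (mul_le_mul_of_nonneg_left h1 (abs_nonneg _)) (le_abs_self _)
    -- key pointwise inequality
    have hpt : ∀ ξ, (f x ξ - lam) * p ξ ≤
        u ξ * max (f x ξ - lam) 0 - l ξ * max (lam - f x ξ) 0 := by
      intro ξ
      rcases le_or_gt 0 (f x ξ - lam) with h | h
      · rw [max_eq_left h, max_eq_right (by linarith)]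
        have := mul_le_mul_of_nonneg_left (hpb ξ).2 h
        nlinarith
      · rw [max_eq_right h.le, max_eq_left (by linarith)]
        have := mul_le_mul_of_nonpos_left (hpb ξ).1 h.le
        nlinarith
    have hkey : ∫ ξ, (f x ξ - lam) * p ξ ∂μ ≤
        ∫ ξ, (u ξ * max (f x ξ - lam) 0 - l ξ * max (lam - f x ξ) 0) ∂μ := by
      refine integral_mono ?_ (hgu.sub hgl) hpt
      have : (fun ξ => (f x ξ - lam) * p ξ) = fun ξ => f x ξ * p ξ - lam * p ξ := by
        funext ξ; ring
      rw [this]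
      exact hfp.sub (hpI.const_mul _)
    have hsplit1 : ∫ ξ, (f x ξ - lam) * p ξ ∂μ = (∫ ξ, f x ξ * p ξ ∂μ) - lam := by
      have : (fun ξ => (f x ξ - lam) * p ξ) = fun ξ => f x ξ * p ξ - lam * p ξ := by
        funext ξ; ring
      rw [this, integral_sub hfp (hpI.const_mul _), integral_const_mul, hpint, mul_one]
    have hsplit2 : ∫ ξ, (u ξ * max (f x ξ - lam) 0 - l ξ * max (lam - f x ξ) 0) ∂μ =
        (∫ ξ, u ξ * max (f x ξ - lam) 0 ∂μ) - ∫ ξ, l ξ * max (lam - f x ξ) 0 ∂μ :=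
      integral_sub hgu hgl
    rw [hsplit1, hsplit2] at hkey
    linarith
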